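/- arXiv:1806.00653 — 7 statements merged into one kernel-verified Lean document; each statement's English description precedes it below -/
import Mathlib

section
/- Let S be an n×n real symmetric matrix with non-negative diagonal entries, non-positive off-diagonal entries, and all row sums non-negative. Then S is a non-negative linear combination of positive semidefinite matrices each of which is supported on a 2×2 principal submatrix, plus a non-negative diagonal matrix. -/
open Matrix Finset

lemma psd_vecMulVec {m : Type*} [Fintype m] (v : m → ℝ) :
    (Matrix.vecMulVec v v).PosSemidef := by
  rw [Matrix.posSemidef_iff_dotProduct_mulVec]
  constructor
  · ext i j
    simp [Matrix.vecMulVec, Matrix.conjTranspose, mul_comm]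
  · intro x
    have h1 : (Matrix.vecMulVec v v) *ᵥ x = (v ⬝ᵥ x) • v := by
      ext i
      simp only [Matrix.mulVec, Matrix.vecMulVec, dotProduct, Pi.smul_apply,
        smul_eq_mul, Matrix.of_apply, Finset.mul_sum]
      rw [Finset.sum_mul]
      exact Finset.sum_congr rfl fun j _ => by ring
    rw [h1]
    have h2 : star x ⬝ᵥ ((v ⬝ᵥ x) • v) = (v ⬝ᵥ x) * (x ⬝ᵥ v) := by
      simp only [dotProduct, Pi.smul_apply, smul_eq_mul, star_trivial, Finset.mul_sum]
      exact Finset.sum_congr rfl fun i _ => by ring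
    rw [h2, dotProduct_comm x v]
    exact mul_self_nonneg _

lemma sum_core (n : ℕ) (S : Matrix (Fin n) (Fin n) ℝ) (hsymm : S.IsSymm) (a b : Fin n) :
    ∑ p : Fin n, ∑ q : Fin n,
      (if p = q then (0:ℝ) else -(S p q) / 2) *
        (((if a = p then (1:ℝ) else 0) - (if a = q then 1 else 0)) *
         ((if b = p then (1:ℝ) else 0) - (if b = q then 1 else 0))) =
    if a = b then S a a - ∑ q, S a q else S a b := by
  classical
  have hS : ∀ i j, S j i = S i j := fun i j => congrFun (congrFun hsymm.symm j) i
  have key : ∀ p q : Fin n,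
      (if p = q then (0:ℝ) else -(S p q) / 2) *
        (((if a = p then (1:ℝ) else 0) - (if a = q then 1 else 0)) *
         ((if b = p then (1:ℝ) else 0) - (if b = q then 1 else 0)))
      = (if a = p then (if b = p then (if p = q then 0 else -(S p q)/2) else 0) else 0)
        - (if a = p then (if b = q then (if p = q then 0 else -(S p q)/2) else 0) else 0)
        - (if a = q then (if b = p then (if p = q then 0 else -(S p q)/2) else 0) else 0)
        + (if a = q then (if b = q then (if p = q then 0 else -(S p q)/2) else 0) else 0) := by
    intro p q
    rcases eq_or_ne p q with hpq | hpq
    · simp [hpq]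
    · by_cases h1 : a = p <;> by_cases h2 : a = q <;> by_cases h3 : b = p <;> by_cases h4 : b = q <;>
        simp [h1, h2, h3, h4, hpq, hpq.symm]
  simp only [key, Finset.sum_add_distrib, Finset.sum_sub_distrib]
  simp only [Finset.sum_ite_irrel, Finset.sum_const_zero, Finset.sum_ite_eq,
    Finset.sum_ite_eq', mem_univ, if_true]
  rcases eq_or_ne a b with hab | hab
  · subst hab
    simp only [if_pos rfl]
    have step : ∀ f : Fin n → ℝ, ∑ q : Fin n, (if a = q then (0:ℝ) else f q)
        = (∑ q, f q) - f a := by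
      intro f
      have h : ∀ q : Fin n, (if a = q then (0:ℝ) else f q) = f q - (if a = q then f q else 0) := by
        intro q; split <;> ring
      simp only [h, Finset.sum_sub_distrib, Finset.sum_ite_eq, mem_univ, if_true]
    have e2 : (∑ x : Fin n, if x = a then (0:ℝ) else -S x a / 2)
        = ∑ q : Fin n, (if a = q then (0:ℝ) else -(S a q)/2) := by
      refine Finset.sum_congr rfl fun x _ => ?_
      rw [hS x a]; exact if_congr eq_comm rfl rfl
    have e3 : ∑ q : Fin n, -(S a q)/2 = -(∑ q, S a q)/2 := by
      rw [← Finset.sum_div, ← Finset.sum_neg_distrib]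
    simp only [if_true, e2, step (fun q => -(S a q)/2)] at *
    rw [e3]
    ring
  · simp [hab, Ne.symm hab, hS b a]
    ring

/-- A real symmetric matrix with non-negative diagonal entries, non-positive
off-diagonal entries, and non-negative row sums is a non-negative combination of
PSD matrices each supported on a 2×2 principal submatrix, plus a non-negative
diagonal matrix. -/
theorem stmt2 (n : ℕ) (S : Matrix (Fin n) (Fin n) ℝ)
    (hsymm : S.IsSymm)
    (hdiag : ∀ i, 0 ≤ S i i)
    (hoff : ∀ i j, i ≠ j → S i j ≤ 0)
    (hrow : ∀ i, 0 ≤ ∑ j, S i j) :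
    ∃ (N : ℕ) (c : Fin N → ℝ) (M : Fin N → Matrix (Fin n) (Fin n) ℝ)
      (D : Matrix (Fin n) (Fin n) ℝ),
      (∀ t, 0 ≤ c t) ∧
      (∀ t, (M t).PosSemidef) ∧
      (∀ t, ∃ p q : Fin n, ∀ a b, M t a b ≠ 0 → (a = p ∨ a = q) ∧ (b = p ∨ b = q)) ∧
      D.IsDiag ∧ (∀ i, 0 ≤ D i i) ∧
      S = (∑ t, c t • M t) + D := by
  classical
  set v : Fin n → Fin n → (Fin n → ℝ) :=
    fun p q a => (if a = p then (1:ℝ) else 0) - (if a = q then 1 else 0) with hv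
  set C : Fin n → Fin n → ℝ := fun p q => if p = q then 0 else -(S p q) / 2 with hC
  set G : Fin n → Fin n → Matrix (Fin n) (Fin n) ℝ :=
    fun p q => Matrix.vecMulVec (v p q) (v p q) with hG
  have e : Fin n × Fin n ≃ Fin (n * n) := finProdFinEquiv
  set cc : Fin (n * n) → ℝ := fun t => C (e.symm t).1 (e.symm t).2 with hcc
  set MM : Fin (n * n) → Matrix (Fin n) (Fin n) ℝ :=
    fun t => G (e.symm t).1 (e.symm t).2 with hMM
  set T : Matrix (Fin n) (Fin n) ℝ := ∑ t, cc t • MM t with hTdef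
  have hT : ∀ a b, T a b = if a = b then S a a - ∑ q, S a q else S a b := by
    intro a b
    have h1 : T a b = ∑ t : Fin (n * n), cc t * ((MM t) a b) := by
      rw [hTdef, Matrix.sum_apply]
      exact Finset.sum_congr rfl fun t _ => rfl
    rw [h1]
    have h2 : ∑ t : Fin (n * n), cc t * ((MM t) a b)
        = ∑ pq : Fin n × Fin n, C pq.1 pq.2 * ((G pq.1 pq.2) a b) :=
      Equiv.sum_comp e.symm (fun pq => C pq.1 pq.2 * ((G pq.1 pq.2) a b))
    rw [h2, Fintype.sum_prod_type]
    have h3 : ∀ p q : Fin n, C p q * ((G p q) a b)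
        = (if p = q then (0:ℝ) else -(S p q) / 2) *
          (((if a = p then (1:ℝ) else 0) - (if a = q then 1 else 0)) *
           ((if b = p then (1:ℝ) else 0) - (if b = q then 1 else 0))) := by
      intro p q
      simp [hC, hG, hv, Matrix.vecMulVec_apply]
    simp only [h3]
    exact sum_core n S hsymm a b
  refine ⟨n * n, cc, MM, S - T, ?_, ?_, ?_, ?_, ?_, ?_⟩
  · intro t
    simp only [hcc, hC]
    split
    · exact le_refl 0
    · rename_i h
      have := hoff _ _ h
      linarith
  · intro t; exact psd_vecMulVec _
  · intro t
    refine ⟨(e.symm t).1, (e.symm t).2, ?_⟩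
    intro a b hab
    simp only [hMM, hG, Matrix.vecMulVec_apply, hv] at hab
    constructor
    · by_contra h
      push_neg at h
      simp [h.1, h.2] at hab
    · by_contra h
      push_neg at h
      simp [h.1, h.2] at hab
  · intro a b hab
    simp only [Matrix.sub_apply, hT a b, if_neg hab, sub_self]
  · intro i
    simp only [Matrix.sub_apply, hT i i, if_pos rfl, if_true, eq_self_iff_true]
    have := hrow i
    linarith
  · rw [← hTdef]
    abel
end

section
/- For any vector x ∈ ℂⁿ and any 1 ≤ k ≤ n, the maximum of |⟨x, v⟩| over unit vectors v ∈ ℂⁿ with at most k non-zero entries equals the square root of the sum of the k largest values among |x_1|², …, |x_n|². -/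
open scoped Classical

/-- The maximum of |⟨x, v⟩| over k-incoherent unit vectors v equals the square
root of the sum of the k largest values among |x_i|². -/
theorem stmt3 (n k : ℕ) (hk : 1 ≤ k) (hkn : k ≤ n) (x : Fin n → ℂ) :
    IsGreatest {r : ℝ | ∃ v : Fin n → ℂ,
        (∑ i, ‖v i‖ ^ 2 = 1) ∧
        (Finset.univ.filter fun i => v i ≠ 0).card ≤ k ∧
        r = ‖∑ i, (starRingEnd ℂ) (x i) * v i‖}
      (Real.sqrt (sSup {t : ℝ | ∃ T : Finset (Fin n), T.card = k ∧
          t = ∑ i ∈ T, ‖x i‖ ^ 2})) := by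
  classical
  set s : Set ℝ := {t : ℝ | ∃ T : Finset (Fin n), T.card = k ∧
      t = ∑ i ∈ T, ‖x i‖ ^ 2} with hs
  have hfin : s.Finite := by
    have hsub : s ⊆ (fun T : Finset (Fin n) => ∑ i ∈ T, ‖x i‖ ^ 2) '' Set.univ := by
      rintro t ⟨T, hT, rfl⟩; exact ⟨T, trivial, rfl⟩
    exact (Set.finite_univ.image _).subset hsub
  obtain ⟨T₁, hT₁sub, hT₁card⟩ := Finset.exists_subset_card_eq
    (s := (Finset.univ : Finset (Fin n))) (n := k) (by simpa using hkn)
  have hne : s.Nonempty := ⟨_, T₁, hT₁card, rfl⟩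
  have hbdd : BddAbove s := hfin.bddAbove
  set m := sSup s with hm
  have hmem : m ∈ s := hne.csSup_mem hfin
  obtain ⟨T₀, hT₀card, hT₀sum⟩ := hmem
  have hub : ∀ t ∈ s, t ≤ m := fun t ht => le_csSup hbdd ht
  have hm0 : 0 ≤ m := by rw [hT₀sum]; positivity
  constructor
  · -- membership: exhibit an optimal v
    by_cases hmz : m = 0
    · have hT₀ne : T₀.Nonempty := Finset.card_pos.mp (by omega)
      obtain ⟨i₀, hi₀⟩ := hT₀ne
      have hx0 : x i₀ = 0 := by
        have hsum0 : ∑ i ∈ T₀, ‖x i‖ ^ 2 = 0 := by rw [← hT₀sum, hmz]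
        have := (Finset.sum_eq_zero_iff_of_nonneg
          (fun i _ => by positivity)).mp hsum0 i₀ hi₀
        have habs : ‖x i₀‖ = 0 := by
          have := sq_eq_zero_iff.mp this
          exact this
        exact (norm_eq_zero).mp habs
      refine ⟨fun i => if i = i₀ then 1 else 0, ?_, ?_, ?_⟩
      · simp [apply_ite (fun z : ℂ => ‖z‖), apply_ite (· ^ 2 : ℝ → ℝ)]
      · have : (Finset.univ.filter fun i => (if i = i₀ then (1:ℂ) else 0) ≠ 0) = {i₀} := by
          ext i; by_cases h : i = i₀ <;> simp [h]
        rw [this]; simpa using hk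
      · rw [hmz, Real.sqrt_zero]
        rw [Finset.sum_eq_single i₀ (by intro b _ hb; simp [hb]) (by simp)]
        simp [hx0]
    · have hmpos : 0 < m := lt_of_le_of_ne hm0 (Ne.symm hmz)
      refine ⟨fun i => if i ∈ T₀ then x i / (Real.sqrt m : ℂ) else 0, ?_, ?_, ?_⟩
      · have : ∀ i, ‖if i ∈ T₀ then x i / (Real.sqrt m : ℂ) else 0‖ ^ 2
            = if i ∈ T₀ then ‖x i‖ ^ 2 / m else 0 := by
          intro i
          by_cases h : i ∈ T₀
          · simp only [h, if_true, norm_div, Complex.norm_real, Real.norm_eq_abs,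
              abs_of_nonneg (Real.sqrt_nonneg m), div_pow, Real.sq_sqrt hm0]
          · simp [h]
        simp_rw [this]
        rw [Finset.sum_ite_mem, Finset.univ_inter, ← Finset.sum_div, ← hT₀sum,
          div_self hmz]
      · have hsub2 : (Finset.univ.filter fun i =>
            (if i ∈ T₀ then x i / (Real.sqrt m : ℂ) else 0) ≠ 0) ⊆ T₀ := by
          intro i hi
          simp only [Finset.mem_filter] at hi
          by_contra h
          exact hi.2 (by simp [h])
        calc _ ≤ T₀.card := Finset.card_le_card hsub2
        _ = k := hT₀card
      · have hsum : ∑ i, (starRingEnd ℂ) (x i) *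
            (if i ∈ T₀ then x i / (Real.sqrt m : ℂ) else 0)
            = (m : ℂ) / (Real.sqrt m : ℂ) := by
          rw [Finset.sum_congr rfl (fun i _ => mul_ite _ _ _ _)]
          simp_rw [mul_zero]
          rw [Finset.sum_ite_mem, Finset.univ_inter]
          have : ∀ i ∈ T₀, (starRingEnd ℂ) (x i) * (x i / (Real.sqrt m : ℂ))
              = ((‖x i‖ ^ 2 : ℝ) : ℂ) / (Real.sqrt m : ℂ) := by
            intro i _
            rw [mul_div_assoc', ← Complex.normSq_eq_conj_mul_self]
            norm_cast
            rw [Complex.sq_norm]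
          rw [Finset.sum_congr rfl this, ← Finset.sum_div]
          congr 1
          rw [hT₀sum]
          norm_cast
        rw [hsum]
        rw [norm_div, Complex.norm_real, Complex.norm_real, Real.norm_eq_abs, Real.norm_eq_abs,
          abs_of_nonneg hm0, abs_of_nonneg (Real.sqrt_nonneg m), Real.div_sqrt]
  · -- upper bound
    rintro r ⟨v, hv1, hvcard, rfl⟩
    set F := Finset.univ.filter fun i => v i ≠ 0 with hF
    have hrestrict : ∑ i, (starRingEnd ℂ) (x i) * v i
        = ∑ i ∈ F, (starRingEnd ℂ) (x i) * v i := by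
      symm
      apply Finset.sum_filter_of_ne
      intro i _ h
      intro hv
      exact h (by simp [hv])
    have h2 : ‖∑ i ∈ F, (starRingEnd ℂ) (x i) * v i‖
        ≤ ∑ i ∈ F, ‖x i‖ * ‖v i‖ := by
      refine le_trans (norm_sum_le _ _) (le_of_eq ?_)
      refine Finset.sum_congr rfl fun i _ => ?_
      rw [norm_mul, Complex.norm_conj]
    have h3 : ∑ i ∈ F, ‖x i‖ * ‖v i‖
        ≤ Real.sqrt (∑ i ∈ F, ‖x i‖ ^ 2)
          * Real.sqrt (∑ i ∈ F, ‖v i‖ ^ 2) :=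
      Real.sum_mul_le_sqrt_mul_sqrt _ _ _
    have h4 : ∑ i ∈ F, ‖v i‖ ^ 2 = 1 := by
      rw [← hv1]
      apply Finset.sum_filter_of_ne
      intro i _ h
      intro hv
      exact h (by simp [hv])
    obtain ⟨T, hFT, hTcard⟩ := Finset.exists_superset_card_eq (n := k) hvcard
      (by simpa using hkn)
    have h6 : ∑ i ∈ F, ‖x i‖ ^ 2 ≤ ∑ i ∈ T, ‖x i‖ ^ 2 :=
      Finset.sum_le_sum_of_subset_of_nonneg hFT (fun i _ _ => by positivity)
    have h7 : ∑ i ∈ T, ‖x i‖ ^ 2 ≤ m := hub _ ⟨T, hTcard, rfl⟩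
    calc ‖∑ i, (starRingEnd ℂ) (x i) * v i‖
        ≤ Real.sqrt (∑ i ∈ F, ‖x i‖ ^ 2)
          * Real.sqrt (∑ i ∈ F, ‖v i‖ ^ 2) := by
          rw [hrestrict]; exact le_trans h2 h3
      _ = Real.sqrt (∑ i ∈ F, ‖x i‖ ^ 2) := by rw [h4, Real.sqrt_one, mul_one]
      _ ≤ Real.sqrt m := Real.sqrt_le_sqrt (le_trans h6 h7)
end

section
/- Let v = (v_1,…,v_n) be a unit vector in ℝⁿ with v_1 ≥ v_2 ≥ ⋯ ≥ v_n ≥ 0, fix 2 ≤ k ≤ n, let 2 ≤ ℓ ≤ k be the largest integer with v_{ℓ-1} ≥ s_ℓ/(k-ℓ+1) where s_j = ∑_{i=j}^n v_i, set α = s_ℓ/(k-ℓ+1) and β = √(α s_ℓ + ∑_{j=1}^{ℓ-1} v_j²), and define a = (1/β)(v_1,…,v_{ℓ-1},α,…,α) ∈ ℝⁿ and W = a aᵀ. Then the trace of every k×k principal submatrix of W is at most 1. -/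
lemma aux_sum_le (n m : ℕ) (w : ℕ → ℝ)
    (hmono : ∀ i j, 1 ≤ i → i ≤ j → j ≤ n → w j ≤ w i)
    (T : Finset ℕ) (hT : T ⊆ Finset.Icc 1 n) (hcard : T.card = m) :
    ∑ i ∈ T, w i ≤ ∑ i ∈ Finset.Icc 1 m, w i := by
  classical
  set f := T.orderEmbOfFin hcard with hf
  have hmem : ∀ j, f j ∈ Finset.Icc 1 n := fun j => hT (T.orderEmbOfFin_mem hcard j)
  have hge : ∀ (jn : ℕ) (h : jn < m), jn + 1 ≤ f ⟨jn, h⟩ := by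
    intro jn
    induction jn with
    | zero => intro h; exact (Finset.mem_Icc.mp (hmem ⟨0, h⟩)).1
    | succ p ih =>
      intro h
      have hp : p < m := Nat.lt_of_succ_lt h
      have h1 : f ⟨p, hp⟩ < f ⟨p + 1, h⟩ := by
        apply (T.orderEmbOfFin hcard).strictMono
        exact Fin.mk_lt_mk.mpr (Nat.lt_succ_self p)
      have := ih hp
      omega
  have hTimg : T = Finset.image (fun j => f j) Finset.univ := by
    ext x
    simp only [Finset.mem_image, Finset.mem_univ, true_and]
    constructor
    · intro hx
      have : x ∈ Set.range f := by rw [Finset.range_orderEmbOfFin]; exact hx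
      obtain ⟨j, hj⟩ := this; exact ⟨j, hj⟩
    · rintro ⟨j, rfl⟩; exact T.orderEmbOfFin_mem hcard j
  have h1 : ∑ i ∈ T, w i = ∑ j : Fin m, w (f j) := by
    rw [hTimg, Finset.sum_image]
    intro x _ y _ hxy
    exact (T.orderEmbOfFin hcard).injective hxy
  have h2 : ∑ i ∈ Finset.Icc 1 m, w i = ∑ j : Fin m, w ((j : ℕ) + 1) := by
    rw [← Finset.Ico_add_one_right_eq_Icc, Finset.sum_Ico_eq_sum_range, Fin.sum_univ_eq_sum_range (fun j => w (j + 1)) m]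
    simp [Nat.add_comm]
  rw [h1, h2]
  apply Finset.sum_le_sum
  intro j _
  exact hmono ((j : ℕ) + 1) (f j) (Nat.le_add_left 1 j) (hge j j.2) (Finset.mem_Icc.mp (hmem j)).2



/-- Every k×k principal submatrix of W = a aᵀ has trace at most 1, where a is
the normalized vector (v_1,…,v_{ℓ-1},α,…,α)/β.  (Entries are 1-indexed.) -/
theorem stmt4 (n k ℓ : ℕ) (v s : ℕ → ℝ) (α β : ℝ) (a : ℕ → ℝ)
    (hk2 : 2 ≤ k) (hkn : k ≤ n)
    (hnn : ∀ i ∈ Finset.Icc 1 n, 0 ≤ v i)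
    (hmono : ∀ i ∈ Finset.Icc 1 n, ∀ j ∈ Finset.Icc 1 n, i ≤ j → v j ≤ v i)
    (hunit : ∑ i ∈ Finset.Icc 1 n, v i ^ 2 = 1)
    (hs : ∀ j, s j = ∑ i ∈ Finset.Icc j n, v i)
    (hℓ2 : 2 ≤ ℓ) (hℓk : ℓ ≤ k)
    (hℓ : s ℓ / ((k - ℓ + 1 : ℕ) : ℝ) ≤ v (ℓ - 1))
    (hℓmax : ∀ m, ℓ < m → m ≤ k → v (m - 1) < s m / ((k - m + 1 : ℕ) : ℝ))
    (hα : α = s ℓ / ((k - ℓ + 1 : ℕ) : ℝ))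
    (hβ : β = Real.sqrt (α * s ℓ + ∑ j ∈ Finset.Icc 1 (ℓ - 1), v j ^ 2))
    (ha : ∀ i, a i = if i ≤ ℓ - 1 then v i / β else α / β) :
    ∀ T ⊆ Finset.Icc 1 n, T.card = k → ∑ i ∈ T, a i * a i ≤ 1 := by
  intro T hT hTcard
  have hn1 : 1 ≤ n := le_trans (le_trans one_le_two hk2) hkn
  -- basic facts
  have hsℓ0 : 0 ≤ s ℓ := by
    rw [hs]
    apply Finset.sum_nonneg
    intro i hi
    exact hnn i (Finset.mem_Icc.mpr ⟨le_trans (le_trans one_le_two hℓ2) (Finset.mem_Icc.mp hi).1,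
      (Finset.mem_Icc.mp hi).2⟩)
  have hd0 : (0 : ℝ) < ((k - ℓ + 1 : ℕ) : ℝ) := by positivity
  have hα0 : 0 ≤ α := by rw [hα]; positivity
  have hαle : α ≤ v (ℓ - 1) := hα ▸ hℓ
  have hcast : ((k - ℓ + 1 : ℕ) : ℝ) * α = s ℓ := by
    rw [hα, mul_comm, div_mul_cancel₀ _ hd0.ne']
  -- sum of squares over Icc 1 (ℓ-1) is positive
  have hv1pos : 0 < v 1 := by
    by_contra h
    push_neg at h
    have h1 : v 1 = 0 := le_antisymm h (hnn 1 (Finset.mem_Icc.mpr ⟨le_refl 1, hn1⟩))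
    have : ∑ i ∈ Finset.Icc 1 n, v i ^ 2 = 0 := by
      apply Finset.sum_eq_zero
      intro i hi
      have hi' := Finset.mem_Icc.mp hi
      have hle := hmono 1 (Finset.mem_Icc.mpr ⟨le_refl 1, hn1⟩) i hi hi'.1
      have h0i := hnn i hi
      nlinarith
    rw [this] at hunit; norm_num at hunit
  have hsum1pos : 0 < ∑ j ∈ Finset.Icc 1 (ℓ - 1), v j ^ 2 := by
    have h1mem : 1 ∈ Finset.Icc 1 (ℓ - 1) := Finset.mem_Icc.mpr ⟨le_refl 1, by omega⟩
    have h := Finset.single_le_sum (f := fun j => v j ^ 2) (fun i _ => sq_nonneg (v i)) h1mem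
    calc (0:ℝ) < v 1 ^ 2 := by positivity
      _ ≤ _ := h
  have hβsqpos : 0 < α * s ℓ + ∑ j ∈ Finset.Icc 1 (ℓ - 1), v j ^ 2 := by positivity
  have hβpos : 0 < β := hβ ▸ Real.sqrt_pos.mpr hβsqpos
  have hβsq : β ^ 2 = α * s ℓ + ∑ j ∈ Finset.Icc 1 (ℓ - 1), v j ^ 2 := by
    rw [hβ, Real.sq_sqrt hβsqpos.le]
  -- the weight function
  set w : ℕ → ℝ := fun i => if i ≤ ℓ - 1 then v i ^ 2 else α ^ 2 with hw
  have hwa : ∀ i, a i * a i = w i / β ^ 2 := by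
    intro i
    rw [ha i, hw]
    by_cases h : i ≤ ℓ - 1 <;> simp [h, div_mul_div_comm, sq]
  -- w is nonincreasing on [1,n]
  have hwmono : ∀ i j, 1 ≤ i → i ≤ j → j ≤ n → w j ≤ w i := by
    intro i j h1 hij hjn
    have hi : i ∈ Finset.Icc 1 n := Finset.mem_Icc.mpr ⟨h1, le_trans hij hjn⟩
    have hj : j ∈ Finset.Icc 1 n := Finset.mem_Icc.mpr ⟨le_trans h1 hij, hjn⟩
    simp only [hw]
    by_cases hjl : j ≤ ℓ - 1
    · have hil : i ≤ ℓ - 1 := le_trans hij hjl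
      simp only [hil, hjl, if_pos]
      have := hmono i hi j hj hij
      have := hnn j hj
      nlinarith
    · by_cases hil : i ≤ ℓ - 1
      · simp only [hil, hjl, if_pos, if_neg, if_true, if_false]
        have hl1n : ℓ - 1 ≤ n := by omega
        have hlm : (ℓ - 1) ∈ Finset.Icc 1 n := Finset.mem_Icc.mpr ⟨by omega, hl1n⟩
        have hvi : v (ℓ - 1) ≤ v i := hmono i hi (ℓ - 1) hlm hil
        nlinarith
      · simp [hil, hjl]
  -- β² equals the sum of w over the first k indices
  have hβsq' : β ^ 2 = ∑ i ∈ Finset.Icc 1 k, w i := by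
    have hsplit : Finset.Icc 1 k = Finset.Icc 1 (ℓ - 1) ∪ Finset.Icc ℓ k := by
      ext x; simp only [Finset.mem_union, Finset.mem_Icc]; omega
    have hdisj : Disjoint (Finset.Icc 1 (ℓ - 1)) (Finset.Icc ℓ k) := by
      rw [Finset.disjoint_left]
      intro x hx hx'
      simp only [Finset.mem_Icc] at hx hx'
      omega
    rw [hsplit, Finset.sum_union hdisj]
    have h1 : ∑ i ∈ Finset.Icc 1 (ℓ - 1), w i = ∑ j ∈ Finset.Icc 1 (ℓ - 1), v j ^ 2 := by
      apply Finset.sum_congr rfl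
      intro i hi
      simp only [hw, if_pos (Finset.mem_Icc.mp hi).2]
    have h2 : ∑ i ∈ Finset.Icc ℓ k, w i = α * s ℓ := by
      have : ∀ i ∈ Finset.Icc ℓ k, w i = α ^ 2 := by
        intro i hi
        have := (Finset.mem_Icc.mp hi).1
        simp only [hw, if_neg (by omega : ¬ i ≤ ℓ - 1)]
      rw [Finset.sum_congr rfl this, Finset.sum_const, Nat.card_Icc]
      have : k + 1 - ℓ = k - ℓ + 1 := by omega
      rw [this, nsmul_eq_mul, ← hcast]
      ring
    rw [h1, h2, hβsq]
    ring
  -- combine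
  have hkey : ∑ i ∈ T, w i ≤ ∑ i ∈ Finset.Icc 1 k, w i :=
    aux_sum_le n k w hwmono T hT hTcard
  calc ∑ i ∈ T, a i * a i = (∑ i ∈ T, w i) / β ^ 2 := by
        rw [Finset.sum_div]; exact Finset.sum_congr rfl fun i _ => hwa i
    _ ≤ 1 := by
        rw [div_le_one (by positivity)]
        rw [hβsq']
        exact hkey
end

section
/- Let H be an n×n real symmetric matrix, u ∈ ℝⁿ, and V(n,k) the set of vectors in ℝⁿ with exactly k nonzero entries each equal to 1/k. Then the following are equivalent: (a) there exists a real symmetric H such that uᵀHu + c·wᵀHw > xᵀHx for all c ≥ 0, all w = e_i − e_j, and all x ∈ V(n,k); (b) there exists a real symmetric H such that H_{ii} + H_{jj} ≥ 2H_{ij} for all i < j and uᵀHu > xᵀHx for all x ∈ V(n,k). -/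
/-- The set of vectors in ℝⁿ with exactly k nonzero entries, each equal to 1/k. -/
def Vnk (n k : ℕ) : Set (Fin n → ℝ) :=
  {x | ∃ T : Finset (Fin n), T.card = k ∧ ∀ i, x i = if i ∈ T then (1 : ℝ) / k else 0}

lemma quadform_aux (n : ℕ) (H : Matrix (Fin n) (Fin n) ℝ) (i j : Fin n) :
    dotProduct (Pi.single i 1 - Pi.single j 1)
      (H.mulVec (Pi.single i 1 - Pi.single j 1)) =
    H i i + H j j - H i j - H j i := by
  simp [Matrix.mulVec_sub, dotProduct_sub, sub_dotProduct,
    Matrix.mulVec_single, single_dotProduct]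
  ring

lemma Vnk_nonempty (n k : ℕ) (hkn : k ≤ n) : (Vnk n k).Nonempty := by
  obtain ⟨T, -, hT⟩ := Finset.exists_subset_card_eq
    (show k ≤ (Finset.univ : Finset (Fin n)).card by simpa using hkn)
  exact ⟨fun i => if i ∈ T then (1 : ℝ) / k else 0, T, hT, fun i => rfl⟩

/-- Lemma 3 of Johnston–Li–Plosker–Poon–Regula: equivalence of the two forms of
the separating-hyperplane condition. -/
theorem stmt10 (n k : ℕ) (hk : 1 ≤ k) (hkn : k ≤ n)
    (u : Fin n → ℝ) (hu1 : ∀ i, u i ∈ Set.Icc (0 : ℝ) (1 / k)) (hu2 : ∑ i, u i = 1) :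
    (∃ H : Matrix (Fin n) (Fin n) ℝ, H.IsSymm ∧
      ∀ c : ℝ, 0 ≤ c → ∀ i j : Fin n, ∀ x ∈ Vnk n k,
        dotProduct x (H.mulVec x) <
          dotProduct u (H.mulVec u) +
            c * dotProduct (Pi.single i 1 - Pi.single j 1)
              (H.mulVec (Pi.single i 1 - Pi.single j 1))) ↔
    (∃ H : Matrix (Fin n) (Fin n) ℝ, H.IsSymm ∧
      (∀ i j : Fin n, i < j → 2 * H i j ≤ H i i + H j j) ∧
      ∀ x ∈ Vnk n k,
        dotProduct x (H.mulVec x) < dotProduct u (H.mulVec u)) := by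
  have hn : 0 < n := lt_of_lt_of_le hk hkn
  have i0 : Fin n := ⟨0, hn⟩
  obtain ⟨x₀, hx₀⟩ := Vnk_nonempty n k hkn
  constructor
  · rintro ⟨H, hsym, hH⟩
    have hsym' : ∀ i j, H j i = H i j := fun i j =>
      (congrFun (congrFun hsym j) i : H.transpose j i = H j i) ▸ rfl
    have hlt : ∀ x ∈ Vnk n k,
        dotProduct x (H.mulVec x) < dotProduct u (H.mulVec u) := by
      intro x hx
      have := hH 0 le_rfl i0 i0 x hx
      simpa using this
    refine ⟨H, hsym, fun i j _ => ?_, hlt⟩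
    by_contra hcon
    push_neg at hcon
    set q : ℝ := dotProduct (Pi.single i 1 - Pi.single j 1)
        (H.mulVec (Pi.single i 1 - Pi.single j 1)) with hq
    have hqval : q = H i i + H j j - 2 * H i j := by
      rw [hq, quadform_aux]; rw [hsym' i j]; ring
    have hqneg : q < 0 := by rw [hqval]; linarith
    set d : ℝ := dotProduct u (H.mulVec u) - dotProduct x₀ (H.mulVec x₀)
      with hd
    have hdpos : 0 < d := sub_pos.mpr (hlt x₀ hx₀)
    have hcpos : 0 ≤ d / (-q) := le_of_lt (div_pos hdpos (by linarith))
    have := hH (d / (-q)) hcpos i j x₀ hx₀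
    rw [← hq] at this
    have hqne : q ≠ 0 := ne_of_lt hqneg
    have : d / (-q) * q = -d := by
      field_simp
    linarith [hH (d / (-q)) hcpos i j x₀ hx₀, this]
  · rintro ⟨H, hsym, hdiag, hlt⟩
    have hsym' : ∀ i j, H j i = H i j := fun i j =>
      (congrFun (congrFun hsym j) i : H.transpose j i = H j i) ▸ rfl
    refine ⟨H, hsym, fun c hc i j x hx => ?_⟩
    have hqval : dotProduct (Pi.single i 1 - Pi.single j 1)
        (H.mulVec (Pi.single i 1 - Pi.single j 1)) = H i i + H j j - 2 * H i j := by
      rw [quadform_aux, hsym' i j]; ring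
    have hqnn : 0 ≤ H i i + H j j - 2 * H i j := by
      rcases lt_trichotomy i j with h | h | h
      · linarith [hdiag i j h]
      · subst h; ring_nf; exact le_refl 0
      · have := hdiag j i h
        rw [hsym' i j] at *
        linarith
    have := hlt x hx
    nlinarith [mul_nonneg hc hqnn, hqval]
end

section
/- Let u ∈ ℝⁿ with all entries u_i ∈ [0, 1/k] and ∑_i u_i = 1, where u has at least one entry strictly in (0, 1/k). Then there is no real symmetric matrix H with H_{ii} + H_{jj} ≥ 2H_{ij} for all i < j such that uᵀHu > xᵀHx for every x ∈ ℝⁿ having exactly k nonzero entries each equal to 1/k. -/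
open scoped Classical


noncomputable def Qf {n : ℕ} (H : Matrix (Fin n) (Fin n) ℝ) (v : Fin n → ℝ) : ℝ :=
  dotProduct v (H.mulVec v)

lemma Qf_expand {n : ℕ} (H : Matrix (Fin n) (Fin n) ℝ) (u d : Fin n → ℝ) (t : ℝ) :
    Qf H (fun l => u l + t * d l)
      = Qf H u + t * (dotProduct u (H.mulVec d) + dotProduct d (H.mulVec u))
        + t^2 * Qf H d := by
  have h : (fun l => u l + t * d l) = u + t • d := rfl
  rw [h]
  simp [Qf, Matrix.mulVec_add, Matrix.mulVec_smul, dotProduct_add,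
    add_dotProduct, dotProduct_smul, smul_dotProduct, smul_eq_mul]
  ring

noncomputable def dvec {n : ℕ} (i j : Fin n) : Fin n → ℝ :=
  fun l => (if l = i then (1:ℝ) else 0) - (if l = j then 1 else 0)

lemma mulVec_dvec {n : ℕ} (H : Matrix (Fin n) (Fin n) ℝ) (i j : Fin n) (l : Fin n) :
    H.mulVec (dvec i j) l = H l i - H l j := by
  simp [dvec, Matrix.mulVec, dotProduct, mul_sub, Finset.sum_sub_distrib,
    mul_ite, mul_one, mul_zero, Finset.sum_ite_eq']

lemma Qf_dvec {n : ℕ} (H : Matrix (Fin n) (Fin n) ℝ) (i j : Fin n) :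
    Qf H (dvec i j) = H i i - H i j - H j i + H j j := by
  simp only [Qf, dotProduct]
  simp only [mulVec_dvec]
  simp [dvec, sub_mul, ite_mul, one_mul, zero_mul, Finset.sum_sub_distrib,
    Finset.sum_ite_eq']
  ring

lemma dot_dvec {n : ℕ} (v w : Fin n → ℝ) (i j : Fin n) :
    dotProduct (dvec i j) w = w i - w j := by
  simp [dvec, dotProduct, sub_mul, ite_mul, one_mul, zero_mul,
    Finset.sum_sub_distrib, Finset.sum_ite_eq']

lemma sum_dvec {n : ℕ} (i j : Fin n) : ∑ l, dvec i j l = 1 - 1 := by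
  simp [dvec, Finset.sum_sub_distrib, Finset.sum_ite_eq']

lemma C_nonneg {n : ℕ} (H : Matrix (Fin n) (Fin n) ℝ) (hs : H.IsSymm)
    (hconv : ∀ i j : Fin n, i < j → 2 * H i j ≤ H i i + H j j)
    (i j : Fin n) (hij : i ≠ j) : 0 ≤ Qf H (dvec i j) := by
  rw [Qf_dvec]
  have hsym : H j i = H i j := hs.apply i j
  rcases lt_or_gt_of_ne hij with h | h
  · have := hconv i j h; linarith
  · have := hconv j i h; have : 2 * H j i ≤ H j j + H i i := this; linarith

lemma convex_endpoint (B C s t : ℝ) (hs : 0 < s) (ht : 0 < t) (hC : 0 ≤ C) :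
    0 ≤ (-s) * B + (-s)^2 * C ∨ 0 ≤ t * B + t^2 * C := by
  by_contra h
  push_neg at h
  obtain ⟨h1, h2⟩ := h
  have h1t : ((-s) * B + (-s)^2 * C) * t < 0 := mul_neg_of_neg_of_pos h1 ht
  have h2s : (t * B + t^2 * C) * s < 0 := mul_neg_of_neg_of_pos h2 hs
  nlinarith [mul_nonneg (mul_nonneg hs.le ht.le) hC,
    mul_nonneg (mul_nonneg (mul_nonneg hs.le ht.le) hC) (add_pos hs ht).le]

lemma dvec_swap {n : ℕ} (i j : Fin n) (l : Fin n) : dvec j i l = -(dvec i j l) := by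
  simp only [dvec]; ring

lemma move {n : ℕ} (u : Fin n → ℝ) (c : ℝ)
    (hu1 : ∀ l, 0 ≤ u l ∧ u l ≤ c)
    (i j : Fin n) (hij : i ≠ j) (hi : 0 < u i ∧ u i < c) (hj : 0 < u j ∧ u j < c) :
    (∀ l, 0 ≤ u l + min (c - u i) (u j) * dvec i j l
        ∧ u l + min (c - u i) (u j) * dvec i j l ≤ c) ∧
    (∑ l, (u l + min (c - u i) (u j) * dvec i j l) = ∑ l, u l) ∧
    (Finset.univ.filter fun l => 0 < u l + min (c - u i) (u j) * dvec i j l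
        ∧ u l + min (c - u i) (u j) * dvec i j l < c)
      ⊂ (Finset.univ.filter fun l => 0 < u l ∧ u l < c) := by
  set t := min (c - u i) (u j) with htdef
  have ht : 0 < t := lt_min (by linarith [hi.2]) hj.1
  have hdi : dvec i j i = 1 := by simp [dvec, hij]
  have hdj : dvec i j j = -1 := by simp [dvec, hij.symm]
  have hdo : ∀ l, l ≠ i → l ≠ j → dvec i j l = 0 := by intro l h1 h2; simp [dvec, h1, h2]
  have hti : t ≤ c - u i := min_le_left _ _
  have htj : t ≤ u j := min_le_right _ _
  refine ⟨?_, ?_, ?_⟩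
  · intro l
    by_cases h1 : l = i
    · subst h1; rw [hdi]; constructor <;> nlinarith [hi.1]
    · by_cases h2 : l = j
      · subst h2; rw [hdj]; constructor <;> nlinarith [hj.1, hj.2]
      · rw [hdo l h1 h2]; simpa using hu1 l
  · rw [Finset.sum_add_distrib, ← Finset.mul_sum, sum_dvec]; ring
  · rw [Finset.ssubset_iff_of_subset]
    · rcases le_total (c - u i) (u j) with hc | hc
      · refine ⟨i, ?_, ?_⟩
        · simp only [Finset.mem_filter, Finset.mem_univ, true_and]; exact hi
        · have : t = c - u i := min_eq_left hc
          simp only [Finset.mem_filter, Finset.mem_univ, true_and, hdi, this]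
          intro h; linarith [h.2]
      · refine ⟨j, ?_, ?_⟩
        · simp only [Finset.mem_filter, Finset.mem_univ, true_and]; exact hj
        · have : t = u j := min_eq_right hc
          simp only [Finset.mem_filter, Finset.mem_univ, true_and, hdj, this]
          intro h; linarith [h.1]
    · intro l hl
      simp only [Finset.mem_filter, Finset.mem_univ, true_and] at hl ⊢
      by_cases h1 : l = i
      · subst h1; exact hi
      · by_cases h2 : l = j
        · subst h2; exact hj
        · rwa [hdo l h1 h2, mul_zero, add_zero] at hl

lemma step {n : ℕ} (H : Matrix (Fin n) (Fin n) ℝ) (hs : H.IsSymm)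
    (hconv : ∀ i j : Fin n, i < j → 2 * H i j ≤ H i i + H j j)
    (u : Fin n → ℝ) (c : ℝ) (hu1 : ∀ l, 0 ≤ u l ∧ u l ≤ c)
    (i j : Fin n) (hij : i ≠ j) (hi : 0 < u i ∧ u i < c) (hj : 0 < u j ∧ u j < c) :
    ∃ u' : Fin n → ℝ, (∀ l, 0 ≤ u' l ∧ u' l ≤ c) ∧ (∑ l, u' l = ∑ l, u l) ∧
      ((Finset.univ.filter fun l => 0 < u' l ∧ u' l < c)
        ⊂ (Finset.univ.filter fun l => 0 < u l ∧ u l < c)) ∧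
      Qf H u ≤ Qf H u' := by
  set B := dotProduct u (H.mulVec (dvec i j))
      + dotProduct (dvec i j) (H.mulVec u) with hB
  set C := Qf H (dvec i j) with hC
  have hC0 : 0 ≤ C := C_nonneg H hs hconv i j hij
  set t := min (c - u i) (u j) with htdef
  set s := min (c - u j) (u i) with hsdef
  have ht : 0 < t := lt_min (by linarith [hi.2]) hj.1
  have hs0 : 0 < s := lt_min (by linarith [hj.2]) hi.1
  rcases convex_endpoint B C s t hs0 ht hC0 with h | h
  · -- move in direction (j,i) with step s
    have hvec : (fun l => u l + (-s) * dvec i j l) = (fun l => u l + s * dvec j i l) := by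
      funext l; rw [dvec_swap]; ring
    have hq : Qf H u ≤ Qf H (fun l => u l + s * dvec j i l) := by
      rw [← hvec, Qf_expand, ← hB, ← hC]; linarith
    have hsmin : s = min (c - u j) (u i) := rfl
    obtain ⟨m1, m2, m3⟩ := move u c hu1 j i hij.symm hj hi
    exact ⟨_, m1, m2, m3, hq⟩
  · have hq : Qf H u ≤ Qf H (fun l => u l + t * dvec i j l) := by
      rw [Qf_expand, ← hB, ← hC]; linarith
    obtain ⟨m1, m2, m3⟩ := move u c hu1 i j hij hi hj
    exact ⟨_, m1, m2, m3, hq⟩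

lemma second_frac {n k : ℕ} (hk : 1 ≤ k) (u : Fin n → ℝ)
    (hu1 : ∀ l, 0 ≤ u l ∧ u l ≤ 1/(k:ℝ)) (hu2 : ∑ l, u l = 1)
    (i : Fin n) (hi : 0 < u i ∧ u i < 1/(k:ℝ)) :
    ∃ j : Fin n, j ≠ i ∧ 0 < u j ∧ u j < 1/(k:ℝ) := by
  have hkpos : (0:ℝ) < k := by exact_mod_cast hk
  set c := 1/(k:ℝ) with hc
  have hcpos : 0 < c := by positivity
  by_contra hcon
  push_neg at hcon
  have hval : ∀ l : Fin n, l ≠ i → u l ≠ c → u l = 0 := by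
    intro l hl hlc
    rcases eq_or_lt_of_le (hu1 l).1 with h | h
    · exact h.symm
    · exact absurd (le_antisymm (hu1 l).2 (hcon l hl h)) hlc
  set T := Finset.univ.filter (fun l => u l = c) with hT
  have hiT : i ∉ T := by
    simp only [hT, Finset.mem_filter, Finset.mem_univ, true_and]
    exact fun h => absurd h (ne_of_lt hi.2)
  have hsplit : ∑ l, u l = ∑ l ∈ T, u l + ∑ l ∈ Finset.univ.filter (fun l => ¬ u l = c), u l :=
    (Finset.sum_filter_add_sum_filter_not _ _ _).symm
  have hsumT : ∑ l ∈ T, u l = T.card * c := by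
    rw [Finset.sum_congr rfl (fun l hl => (Finset.mem_filter.mp hl).2),
      Finset.sum_const, nsmul_eq_mul]
  have hiT' : i ∈ Finset.univ.filter (fun l => ¬ u l = c) := by
    simp only [Finset.mem_filter, Finset.mem_univ, true_and]
    exact fun h => absurd h (ne_of_lt hi.2)
  have hsumN : ∑ l ∈ Finset.univ.filter (fun l => ¬ u l = c), u l = u i := by
    refine Finset.sum_eq_single_of_mem i hiT' ?_
    intro b hb hbi
    exact hval b hbi (Finset.mem_filter.mp hb).2
  rw [hu2, hsumT, hsumN] at hsplit
  -- 1 = T.card * c + u i with 0 < u i < c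
  have h1 : (T.card : ℝ) * c < 1 := by linarith [hi.1]
  have h2 : (1:ℝ) < (T.card + 1) * c := by nlinarith [hi.2]
  have hck : c * k = 1 := by rw [hc]; exact one_div_mul_cancel (ne_of_gt hkpos)
  have hlt : (T.card : ℝ) < k := by
    by_contra hle
    push_neg at hle
    nlinarith
  have hgt : (k:ℝ) < T.card + 1 := by
    by_contra hle
    push_neg at hle
    nlinarith
  have : T.card < k := by exact_mod_cast hlt
  have : k < T.card + 1 := by exact_mod_cast hgt
  omega

lemma vertex {n k : ℕ} (hk : 1 ≤ k) (u : Fin n → ℝ)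
    (hu1 : ∀ l, 0 ≤ u l ∧ u l ≤ 1/(k:ℝ)) (hu2 : ∑ l, u l = 1)
    (hempty : ∀ l, ¬(0 < u l ∧ u l < 1/(k:ℝ))) : u ∈ Vnk n k := by
  have hkpos : (0:ℝ) < k := by exact_mod_cast hk
  have hval : ∀ l, u l = 0 ∨ u l = 1/(k:ℝ) := by
    intro l
    rcases eq_or_lt_of_le (hu1 l).1 with h | h
    · exact Or.inl h.symm
    · rcases eq_or_lt_of_le (hu1 l).2 with h2 | h2
      · exact Or.inr h2
      · exact absurd ⟨h, h2⟩ (hempty l)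
  refine ⟨Finset.univ.filter (fun l => u l ≠ 0), ?_, ?_⟩
  · have hsum : ∑ l, u l
        = ∑ l ∈ Finset.univ.filter (fun l => u l ≠ 0), u l := by
      rw [Finset.sum_filter_ne_zero]
    have hconst : ∑ l ∈ Finset.univ.filter (fun l => u l ≠ 0), u l
        = ((Finset.univ.filter (fun l => u l ≠ 0)).card : ℝ) * (1/(k:ℝ)) := by
      rw [Finset.sum_congr rfl (fun l hl => ?_), Finset.sum_const, nsmul_eq_mul]
      rcases hval l with h | h
      · exact absurd h (Finset.mem_filter.mp hl).2
      · exact h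
    have : ((Finset.univ.filter (fun l => u l ≠ 0)).card : ℝ) * (1/(k:ℝ)) = 1 := by
      rw [← hconst, ← hsum, hu2]
    field_simp at this
    exact_mod_cast this
  · intro i
    by_cases h : u i = 0
    · have hmem : i ∉ Finset.univ.filter (fun l => u l ≠ 0) := by simp [h]
      rw [if_neg hmem, h]
    · rcases hval i with h2 | h2
      · exact absurd h2 h
      · have hmem : i ∈ Finset.univ.filter (fun l => u l ≠ 0) := by simp [h]
        rw [if_pos hmem, h2]

lemma key {n k : ℕ} (hk : 1 ≤ k) (H : Matrix (Fin n) (Fin n) ℝ) (hs : H.IsSymm)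
    (hconv : ∀ i j : Fin n, i < j → 2 * H i j ≤ H i i + H j j) :
    ∀ m : ℕ, ∀ u : Fin n → ℝ, (∀ l, 0 ≤ u l ∧ u l ≤ 1/(k:ℝ)) → ∑ l, u l = 1 →
      (Finset.univ.filter fun l => 0 < u l ∧ u l < 1/(k:ℝ)).card ≤ m →
      ∃ x ∈ Vnk n k, Qf H u ≤ Qf H x := by
  intro m
  induction m with
  | zero =>
    intro u hu1 hu2 hcard
    have hempty : ∀ l, ¬(0 < u l ∧ u l < 1/(k:ℝ)) := by
      intro l hl
      have := Finset.card_eq_zero.mp (Nat.le_zero.mp hcard)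
      have : l ∈ (Finset.univ.filter fun l => 0 < u l ∧ u l < 1/(k:ℝ)) := by
        simp only [Finset.mem_filter, Finset.mem_univ, true_and]; exact hl
      rw [‹(Finset.univ.filter fun l => 0 < u l ∧ u l < 1/(k:ℝ)) = ∅›] at this
      simp at this
    exact ⟨u, vertex hk u hu1 hu2 hempty, le_refl _⟩
  | succ m ih =>
    intro u hu1 hu2 hcard
    by_cases hle : (Finset.univ.filter fun l => 0 < u l ∧ u l < 1/(k:ℝ)).card ≤ m
    · exact ih u hu1 hu2 hle
    · push_neg at hle
      have hne : (Finset.univ.filter fun l => 0 < u l ∧ u l < 1/(k:ℝ)).Nonempty :=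
        Finset.card_pos.mp (by omega)
      obtain ⟨i, hiF⟩ := hne
      have hi : 0 < u i ∧ u i < 1/(k:ℝ) := (Finset.mem_filter.mp hiF).2
      obtain ⟨j, hji, hj⟩ := second_frac hk u hu1 hu2 i hi
      obtain ⟨u', hu'1, hu'2, hss, hQ⟩ := step H hs hconv u (1/(k:ℝ)) hu1 i j hji.symm hi hj
      have hcard' : (Finset.univ.filter fun l => 0 < u' l ∧ u' l < 1/(k:ℝ)).card ≤ m := by
        have := Finset.card_lt_card hss
        omega
      obtain ⟨x, hx, hQ2⟩ := ih u' hu'1 (by rw [hu'2, hu2]) hcard'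
      exact ⟨x, hx, le_trans hQ hQ2⟩

/-- Lemma 4 of Johnston–Li–Plosker–Poon–Regula: no symmetric matrix H with the
convexity condition strictly separates u from all vertices in V(n,k). -/
theorem stmt11 (n k : ℕ) (hk : 1 ≤ k) (hkn : k ≤ n)
    (u : Fin n → ℝ) (hu1 : ∀ i, u i ∈ Set.Icc (0 : ℝ) (1 / k)) (hu2 : ∑ i, u i = 1)
    (hfrac : ∃ i, u i ∈ Set.Ioo (0 : ℝ) (1 / k)) :
    ¬ ∃ H : Matrix (Fin n) (Fin n) ℝ, H.IsSymm ∧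
        (∀ i j : Fin n, i < j → 2 * H i j ≤ H i i + H j j) ∧
        ∀ x ∈ Vnk n k,
          dotProduct x (H.mulVec x) < dotProduct u (H.mulVec u) := by
  rintro ⟨H, hsym, hconv, hlt⟩
  have hu1' : ∀ l, 0 ≤ u l ∧ u l ≤ 1/(k:ℝ) := fun l => Set.mem_Icc.mp (hu1 l)
  obtain ⟨x, hx, hQ⟩ := key hk H hsym hconv n u hu1' hu2
    ((Finset.card_filter_le _ _).trans (by simp))
  have hx' : x ∈ Vnk n k := hx
  exact absurd (hlt x hx') (not_lt.mpr hQ)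
end

section
/- Let w ∈ ℝⁿ maximize the quadratic form wᵀHw over the polytope P = {w ∈ [0,1/k]ⁿ : ∑_i w_i = 1}, where H is symmetric with H_{ii} + H_{jj} ≥ 2H_{ij} for all i ≠ j, and among maximizers choose w with the maximal number of entries equal to 1/k. Then w has at most one entry strictly in (0, 1/k); consequently (since k·(1/k) = 1) w has exactly k entries equal to 1/k and the rest zero. -/
open scoped Classical
open Matrix Finset

private lemma qsym {n : ℕ} (H : Matrix (Fin n) (Fin n) ℝ) (hs : H.IsSymm)
    (v d : Fin n → ℝ) : v ⬝ᵥ H *ᵥ d = d ⬝ᵥ H *ᵥ v := by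
  rw [Matrix.dotProduct_mulVec, ← Matrix.mulVec_transpose, hs.eq, dotProduct_comm]

private lemma qexpand {n : ℕ} (H : Matrix (Fin n) (Fin n) ℝ) (hs : H.IsSymm)
    (v d : Fin n → ℝ) (t : ℝ) :
    (v + t • d) ⬝ᵥ H *ᵥ (v + t • d)
      = v ⬝ᵥ H *ᵥ v + t * (2 * (d ⬝ᵥ H *ᵥ v)) + t ^ 2 * (d ⬝ᵥ H *ᵥ d) := by
  have h := qsym H hs v d
  simp only [Matrix.mulVec_add, Matrix.mulVec_smul, dotProduct_add,
    add_dotProduct, dotProduct_smul, smul_dotProduct, smul_eq_mul]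
  rw [h]; ring

private lemma dval {n : ℕ} (i j l : Fin n) (hij : i ≠ j) :
    ((Pi.single i 1 - Pi.single j 1 : Fin n → ℝ)) l =
      if l = i then 1 else if l = j then -1 else 0 := by
  by_cases h1 : l = i <;> by_cases h2 : l = j <;>
    simp_all [Pi.single_apply]

private lemma step_s13 {n k : ℕ}
    (H : Matrix (Fin n) (Fin n) ℝ) (hs : H.IsSymm)
    (hconv : ∀ i j : Fin n, i ≠ j → 2 * H i j ≤ H i i + H j j)
    (P : Set (Fin n → ℝ))
    (hP : P = {w | (∀ i, w i ∈ Set.Icc (0 : ℝ) (1 / k)) ∧ ∑ i, w i = 1})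
    (w : Fin n → ℝ)
    (hmax : ∀ w' ∈ P, w' ⬝ᵥ H *ᵥ w' ≤ w ⬝ᵥ H *ᵥ w)
    (v : Fin n → ℝ) (hvP : v ∈ P) (hvQ : v ⬝ᵥ H *ᵥ v = w ⬝ᵥ H *ᵥ w)
    (i j : Fin n) (hij : i ≠ j) (hi : 0 < v i) (hi' : v i < 1 / k)
    (hj : 0 < v j) (hj' : v j < 1 / k) :
    ∃ v' ∈ P, v' ⬝ᵥ H *ᵥ v' = w ⬝ᵥ H *ᵥ w ∧
      (univ.filter fun l => 0 < v' l ∧ v' l < 1 / k) ⊂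
        (univ.filter fun l => 0 < v l ∧ v l < 1 / k) := by
  set d : Fin n → ℝ := Pi.single i 1 - Pi.single j 1 with hd
  set a : ℝ := min (1 / k - v i) (v j) with ha
  set c : ℝ := min (v i) (1 / k - v j) with hc
  have ha0 : 0 < a := lt_min (by linarith) hj
  have hc0 : 0 < c := lt_min hi (by linarith)
  have hvP' : v ∈ {w : Fin n → ℝ | (∀ i, w i ∈ Set.Icc (0 : ℝ) (1 / k)) ∧ ∑ i, w i = 1} := by
    rw [← hP]; exact hvP
  obtain ⟨hvIcc, hvsum⟩ := hvP'
  have hval : ∀ t : ℝ, ∀ l, (v + t • d) l =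
      if l = i then v i + t else if l = j then v j - t else v l := by
    intro t l
    have hdl := dval i j l hij
    simp only [Pi.add_apply, Pi.smul_apply, smul_eq_mul, hd] at *
    rw [hdl]
    split_ifs with h1 h2
    · subst h1; ring
    · subst h2; ring
    · ring
  have hsum : ∀ t : ℝ, ∑ l, (v + t • d) l = 1 := by
    intro t
    have h1 : ∑ l, (v + t • d) l = ∑ l, v l + t * ∑ l, d l := by
      simp [Finset.sum_add_distrib, Finset.mul_sum]
    have h2 : ∑ l, d l = 0 := by
      rw [hd]; simp [Finset.sum_sub_distrib]
    rw [h1, h2, hvsum]; ring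
  have hmem : ∀ t : ℝ, -c ≤ t → t ≤ a → (v + t • d) ∈ P := by
    intro t ht1 ht2
    rw [hP]
    refine ⟨fun l => ?_, hsum t⟩
    rw [Set.mem_Icc, hval t l]
    have h1 : t ≤ 1 / k - v i := le_trans ht2 (by rw [ha]; exact min_le_left _ _)
    have h2 : t ≤ v j := le_trans ht2 (by rw [ha]; exact min_le_right _ _)
    have h3 : -(v i) ≤ t := by
      have : c ≤ v i := by rw [hc]; exact min_le_left _ _
      linarith
    have h4 : -(1 / k - v j) ≤ t := by
      have : c ≤ 1 / k - v j := by rw [hc]; exact min_le_right _ _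
      linarith
    split_ifs with e1 e2
    · exact ⟨by linarith, by linarith⟩
    · exact ⟨by linarith, by linarith⟩
    · exact ⟨(hvIcc l).1, (hvIcc l).2⟩
  set L : ℝ := d ⬝ᵥ H *ᵥ v with hL
  set qd : ℝ := d ⬝ᵥ H *ᵥ d with hqd
  have hHd : H *ᵥ d = fun p => H p i - H p j := by
    funext p
    rw [hd, Matrix.mulVec_sub]
    simp [Matrix.mulVec_single]
  have hqdval : qd = H i i + H j j - 2 * H i j := by
    rw [hqd, hHd, hd, sub_dotProduct]
    simp only [single_dotProduct, one_mul]
    rw [hs.apply i j]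
    ring
  have hqd0 : 0 ≤ qd := by rw [hqdval]; have := hconv i j hij; linarith
  have hup : a * (2 * L) + a ^ 2 * qd ≤ 0 := by
    have := hmax _ (hmem a (by linarith) le_rfl)
    rw [qexpand H hs v d a, hvQ, ← hL, ← hqd] at this
    linarith
  have hdown : (-c) * (2 * L) + (-c) ^ 2 * qd ≤ 0 := by
    have := hmax _ (hmem (-c) le_rfl (by linarith))
    rw [qexpand H hs v d (-c), hvQ, ← hL, ← hqd] at this
    linarith
  have hqd00 : qd = 0 := by
    refine le_antisymm ?_ hqd0
    by_contra h
    push_neg at h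
    nlinarith [mul_le_mul_of_nonneg_left hup hc0.le, mul_le_mul_of_nonneg_left hdown ha0.le,
      mul_pos (mul_pos ha0 hc0) (add_pos ha0 hc0)]
  have hL2 : 2 * L ≤ 0 := by
    rw [hqd00] at hup
    have h : a * (2 * L) ≤ a * 0 := by linarith
    exact (mul_le_mul_iff_right₀ ha0).mp h
  have hL2' : 0 ≤ 2 * L := by
    rw [hqd00] at hdown
    have h : c * 0 ≤ c * (2 * L) := by nlinarith
    exact (mul_le_mul_iff_right₀ hc0).mp h
  have hL0 : L = 0 := by linarith
  have hsub : (univ.filter fun l => 0 < (v + a • d) l ∧ (v + a • d) l < 1 / (k:ℝ)) ⊆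
      (univ.filter fun l => 0 < v l ∧ v l < 1 / (k:ℝ)) := by
    intro l hl
    simp only [Finset.mem_filter, Finset.mem_univ, true_and] at hl ⊢
    by_cases e1 : l = i
    · subst e1; exact ⟨hi, hi'⟩
    by_cases e2 : l = j
    · subst e2; exact ⟨hj, hj'⟩
    rwa [hval a l, if_neg e1, if_neg e2] at hl
  refine ⟨v + a • d, hmem a (by linarith) le_rfl, ?_, ?_⟩
  · rw [qexpand H hs v d a, hvQ, ← hL, ← hqd, hL0, hqd00]; ring
  · rw [Finset.ssubset_iff_of_subset hsub]
    by_cases hcase : 1 / (k:ℝ) - v i ≤ v j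
    · refine ⟨i, by simp only [Finset.mem_filter, Finset.mem_univ, true_and]; exact ⟨hi, hi'⟩, ?_⟩
      have hvi : (v + a • d) i = 1 / (k:ℝ) := by
        rw [hval a i, if_pos rfl, ha, min_eq_left hcase]; ring
      simp only [Finset.mem_filter, Finset.mem_univ, true_and, hvi]
      simp
    · refine ⟨j, by simp only [Finset.mem_filter, Finset.mem_univ, true_and]; exact ⟨hj, hj'⟩, ?_⟩
      have hvj : (v + a • d) j = 0 := by
        rw [hval a j, if_neg (Ne.symm hij), if_pos rfl, ha,
          min_eq_right (not_le.mp hcase).le]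
        ring
      simp only [Finset.mem_filter, Finset.mem_univ, true_and, hvj]
      simp


variable {n k : ℕ}

/-- A maximizer of the quadratic form over the polytope P with the maximal number
of entries equal to 1/k has exactly k entries equal to 1/k and the rest zero. -/
theorem stmt13 (n k : ℕ) (hk : 1 ≤ k) (hkn : k ≤ n)
    (H : Matrix (Fin n) (Fin n) ℝ) (hsymm : H.IsSymm)
    (hconv : ∀ i j : Fin n, i ≠ j → 2 * H i j ≤ H i i + H j j)
    (P : Set (Fin n → ℝ))
    (hP : P = {w | (∀ i, w i ∈ Set.Icc (0 : ℝ) (1 / k)) ∧ ∑ i, w i = 1})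
    (w : Fin n → ℝ) (hwP : w ∈ P)
    (hmax : ∀ w' ∈ P,
      dotProduct w' (H.mulVec w') ≤ dotProduct w (H.mulVec w))
    (hcard : ∀ w' ∈ P,
      dotProduct w' (H.mulVec w') = dotProduct w (H.mulVec w) →
      (Finset.univ.filter fun i => w' i = (1 : ℝ) / k).card ≤
        (Finset.univ.filter fun i => w i = (1 : ℝ) / k).card) :
    (Finset.univ.filter fun i => w i = (1 : ℝ) / k).card = k ∧
    ∀ i, w i = (1 : ℝ) / k ∨ w i = 0 := by
  have hk0 : (0 : ℝ) < k := by exact_mod_cast hk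
  set m := (Finset.univ.filter fun i => w i = (1 : ℝ) / k).card with hm
  -- each v in P has entries in [0, 1/k], and entries that are not fractional are 0 or 1/k
  have hPmem : ∀ v ∈ P, (∀ l, 0 ≤ v l ∧ v l ≤ 1 / (k:ℝ)) ∧ ∑ l, v l = 1 := by
    intro v hv
    rw [hP] at hv
    exact ⟨fun l => (hv.1 l), hv.2⟩
  have hdico : ∀ v ∈ P, ∀ l : Fin n, ¬(0 < v l ∧ v l < 1 / (k:ℝ)) →
      v l = 0 ∨ v l = 1 / (k:ℝ) := by
    intro v hv l hl
    obtain ⟨h1, h2⟩ := (hPmem v hv).1 l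
    rcases lt_or_eq_of_le h1 with h | h
    · rcases lt_or_eq_of_le h2 with h' | h'
      · exact absurd ⟨h, h'⟩ hl
      · exact Or.inr h'
    · exact Or.inl h.symm
  -- base case : no fractional entries
  have hbase : ∀ v ∈ P,
      dotProduct v (H.mulVec v) = dotProduct w (H.mulVec w) →
      (Finset.univ.filter fun l => 0 < v l ∧ v l < 1 / (k:ℝ)).card = 0 → k ≤ m := by
    intro v hv hQ h0
    have hempty : ∀ l : Fin n, v l = 0 ∨ v l = 1 / (k:ℝ) := by
      intro l
      refine hdico v hv l fun hfrac => ?_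
      have : l ∈ Finset.univ.filter fun l => 0 < v l ∧ v l < 1 / (k:ℝ) :=
        Finset.mem_filter.mpr ⟨Finset.mem_univ l, hfrac⟩
      rw [Finset.card_eq_zero.mp h0] at this
      exact absurd this (Finset.notMem_empty l)
    set c := (Finset.univ.filter fun l => v l = (1:ℝ) / k).card with hcdef
    have hsplit := Finset.sum_filter_add_sum_filter_not Finset.univ
      (fun l => v l = (1:ℝ) / k) v
    have h1 : ∑ l ∈ Finset.univ.filter (fun l => v l = (1:ℝ) / k), v l = c * (1 / k) := by
      rw [Finset.sum_congr rfl (fun l hl => (Finset.mem_filter.mp hl).2),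
        Finset.sum_const, nsmul_eq_mul, ← hcdef]
    have h2 : ∑ l ∈ Finset.univ.filter (fun l => ¬ v l = (1:ℝ) / k), v l = 0 := by
      refine Finset.sum_eq_zero fun l hl => ?_
      rcases hempty l with h | h
      · exact h
      · exact absurd h (Finset.mem_filter.mp hl).2
    have hsum1 : (c : ℝ) * (1 / k) = 1 := by
      rw [← h1]
      have := (hPmem v hv).2
      linarith [hsplit, h2, this]
    have hck : c = k := by
      have : (c : ℝ) = k := by field_simp at hsum1; exact_mod_cast hsum1
      exact_mod_cast this
    calc k = c := hck.symm
    _ ≤ m := hcard v hv hQ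
  -- exactly one fractional entry is impossible
  have hone : ∀ v ∈ P, (Finset.univ.filter fun l => 0 < v l ∧ v l < 1 / (k:ℝ)).card ≠ 1 := by
    intro v hv h1
    obtain ⟨i0, hi0⟩ := Finset.card_eq_one.mp h1
    have hi0mem : i0 ∈ Finset.univ.filter fun l => 0 < v l ∧ v l < 1 / (k:ℝ) := by
      rw [hi0]; exact Finset.mem_singleton_self i0
    obtain ⟨-, hfi0⟩ := Finset.mem_filter.mp hi0mem
    have hothers : ∀ l : Fin n, l ≠ i0 → v l = 0 ∨ v l = 1 / (k:ℝ) := by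
      intro l hl
      refine hdico v hv l fun hfrac => ?_
      have : l ∈ Finset.univ.filter fun l => 0 < v l ∧ v l < 1 / (k:ℝ) :=
        Finset.mem_filter.mpr ⟨Finset.mem_univ l, hfrac⟩
      rw [hi0, Finset.mem_singleton] at this
      exact hl this
    set c := ((Finset.univ.erase i0).filter fun l => v l = (1:ℝ) / k).card with hcdef
    have hsum : ∑ l ∈ Finset.univ.erase i0, v l + v i0 = 1 := by
      rw [Finset.sum_erase_add _ _ (Finset.mem_univ i0)]
      exact (hPmem v hv).2
    have hsplit := Finset.sum_filter_add_sum_filter_not (Finset.univ.erase i0)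
      (fun l => v l = (1:ℝ) / k) v
    have h1' : ∑ l ∈ (Finset.univ.erase i0).filter (fun l => v l = (1:ℝ) / k), v l
        = c * (1 / k) := by
      rw [Finset.sum_congr rfl (fun l hl => (Finset.mem_filter.mp hl).2),
        Finset.sum_const, nsmul_eq_mul, ← hcdef]
    have h2' : ∑ l ∈ (Finset.univ.erase i0).filter (fun l => ¬ v l = (1:ℝ) / k), v l = 0 := by
      refine Finset.sum_eq_zero fun l hl => ?_
      have hlmem := Finset.mem_filter.mp hl
      have hlne : l ≠ i0 := Finset.ne_of_mem_erase hlmem.1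
      rcases hothers l hlne with h | h
      · exact h
      · exact absurd h hlmem.2
    have heq : (c : ℝ) * (1 / k) + v i0 = 1 := by
      rw [← h1']
      linarith [hsplit, h2', hsum]
    have hkk : (k:ℝ) * (1 / k) = 1 := by field_simp
    have hthis : (c : ℝ) * (1 / k) = 1 - v i0 := by linarith
    have hclt : (c : ℝ) < k := by
      have h5 : (c:ℝ) * (1/k) < (k:ℝ) * (1/k) := by rw [hkk, hthis]; linarith [hfi0.1]
      exact (mul_lt_mul_iff_left₀ (by positivity : (0:ℝ) < 1/k)).mp h5
    have hcgt : (k : ℝ) - 1 < c := by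
      have h5 : ((k:ℝ)-1) * (1/k) < (c:ℝ) * (1/k) := by
        have e : ((k:ℝ)-1)*(1/k) = (k:ℝ)*(1/k) - 1/k := by ring
        rw [e, hkk, hthis]; linarith [hfi0.2]
      exact (mul_lt_mul_iff_left₀ (by positivity : (0:ℝ) < 1/k)).mp h5
    have hn1 : c < k := by exact_mod_cast hclt
    have hn2 : k ≤ c := by
      have : (k : ℝ) < c + 1 := by linarith
      have := (by exact_mod_cast this : k < c + 1)
      omega
    omega
  -- induction on the number of fractional entries
  have key : ∀ N : ℕ, ∀ v ∈ P,
      dotProduct v (H.mulVec v) = dotProduct w (H.mulVec w) →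
      (Finset.univ.filter fun l => 0 < v l ∧ v l < 1 / (k:ℝ)).card ≤ N → k ≤ m := by
    intro N
    induction N with
    | zero =>
      intro v hv hQ hle
      exact hbase v hv hQ (Nat.le_zero.mp hle)
    | succ N ih =>
      intro v hv hQ hle
      rcases Nat.lt_or_ge
        (Finset.univ.filter fun l => 0 < v l ∧ v l < 1 / (k:ℝ)).card 2 with hlt | hge
      · interval_cases hcc : (Finset.univ.filter fun l => 0 < v l ∧ v l < 1 / (k:ℝ)).card
        · exact hbase v hv hQ hcc
        · exact absurd hcc (hone v hv)
      · obtain ⟨i, hi, j, hj, hij⟩ := Finset.one_lt_card.mp hge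
        obtain ⟨-, hfi⟩ := Finset.mem_filter.mp hi
        obtain ⟨-, hfj⟩ := Finset.mem_filter.mp hj
        obtain ⟨v', hv'P, hv'Q, hss⟩ := step_s13 H hsymm hconv P hP w hmax v hv hQ i j hij
          hfi.1 hfi.2 hfj.1 hfj.2
        refine ih v' hv'P hv'Q ?_
        have := Finset.card_lt_card hss
        omega
  have hkm : k ≤ m := key _ w hwP rfl le_rfl
  -- m ≤ k
  have hsub : (Finset.univ.filter fun i => w i = (1:ℝ) / k) ⊆ Finset.univ :=
    Finset.filter_subset _ _
  have hwsum := (hPmem w hwP).2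
  have hsum_filter : ∑ l ∈ (Finset.univ.filter fun i => w i = (1:ℝ) / k), w l
      = m * (1 / k) := by
    rw [Finset.sum_congr rfl (fun l hl => (Finset.mem_filter.mp hl).2),
      Finset.sum_const, nsmul_eq_mul, ← hm]
  have hmlek : m ≤ k := by
    have hle : ∑ l ∈ (Finset.univ.filter fun i => w i = (1:ℝ) / k), w l ≤ ∑ l, w l :=
      Finset.sum_le_sum_of_subset_of_nonneg hsub fun l _ _ => ((hPmem w hwP).1 l).1
    rw [hsum_filter, hwsum] at hle
    have hkk : (k:ℝ) * (1 / k) = 1 := by field_simp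
    have h6 : (m:ℝ) * (1/k) ≤ (k:ℝ) * (1/k) := by rw [hkk]; exact hle
    have : (m : ℝ) ≤ k := (mul_le_mul_iff_left₀ (by positivity : (0:ℝ) < 1/k)).mp h6
    exact_mod_cast this
  have hmk : m = k := le_antisymm hmlek hkm
  refine ⟨hmk, fun i => ?_⟩
  by_cases hwi : w i = (1:ℝ) / k
  · exact Or.inl hwi
  · right
    have hzero : ∑ l ∈ (Finset.univ.filter fun l => ¬ w l = (1:ℝ) / k), w l = 0 := by
      have hsplit := Finset.sum_filter_add_sum_filter_not Finset.univ
        (fun l => w l = (1:ℝ) / k) w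
      rw [hsum_filter, hwsum, hmk] at hsplit
      have : (k : ℝ) * (1 / k) = 1 := by field_simp
      linarith
    have := (Finset.sum_eq_zero_iff_of_nonneg
      (fun l _ => ((hPmem w hwP).1 l).1)).mp hzero
    exact this i (Finset.mem_filter.mpr ⟨Finset.mem_univ i, hwi⟩)
end

section
/- Let W be an n×n Hermitian matrix. Then tr(Wρ) ≥ 0 for every density matrix ρ in I_k (the convex hull of pure states with at most k non-zero entries) if and only if every k×k principal submatrix of W is positive semidefinite. -/
open scoped Classical
open Matrix

private lemma trace_mul_outer {n : ℕ} (W : Matrix (Fin n) (Fin n) ℂ) (v : Fin n → ℂ) :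
    (W * Matrix.of fun i j => v i * star (v j)).trace = star v ⬝ᵥ W *ᵥ v := by
  simp only [Matrix.trace, Matrix.diag, Matrix.mul_apply, Matrix.of_apply,
    dotProduct, Matrix.mulVec, Pi.star_apply]
  refine Finset.sum_congr rfl fun i _ => ?_
  rw [Finset.mul_sum]
  refine Finset.sum_congr rfl fun j _ => ?_
  ring

private lemma sum_support_subset {n k : ℕ} {β : Type*} [AddCommMonoid β]
    (f : Fin k → Fin n) (hf : Function.Injective f) (h : Fin n → β)
    (h0 : ∀ i, (∀ a, f a ≠ i) → h i = 0) :
    ∑ i, h i = ∑ a, h (f a) := by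
  rw [← Finset.sum_image (g := f) (f := h) (s := (Finset.univ : Finset (Fin k)))
      (fun x _ y _ hxy => hf hxy)]
  refine (Finset.sum_subset (Finset.subset_univ _) fun i _ hi => ?_).symm
  exact h0 i fun a hfa => hi (Finset.mem_image.2 ⟨a, Finset.mem_univ a, hfa⟩)

private lemma quad_restrict {n k : ℕ} (W : Matrix (Fin n) (Fin n) ℂ)
    (f : Fin k → Fin n) (hf : Function.Injective f) (v : Fin n → ℂ)
    (h0 : ∀ i, (∀ a, f a ≠ i) → v i = 0) :
    star v ⬝ᵥ W *ᵥ v = star (v ∘ f) ⬝ᵥ (W.submatrix f f) *ᵥ (v ∘ f) := by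
  simp only [dotProduct, Matrix.mulVec, Pi.star_apply, Function.comp_apply,
    Matrix.submatrix_apply]
  rw [sum_support_subset f hf _ (fun i hi => by rw [h0 i hi]; simp)]
  refine Finset.sum_congr rfl fun a _ => ?_
  congr 1
  exact sum_support_subset f hf _ (fun j hj => by rw [h0 j hj]; simp)

/-- The set of k-incoherent density matrices. -/
def kIncoherent (n k : ℕ) : Set (Matrix (Fin n) (Fin n) ℂ) :=
  convexHull ℝ {M | ∃ v : Fin n → ℂ,
    (∑ i, ‖v i‖ ^ 2 = 1) ∧
    (Finset.univ.filter fun i => v i ≠ 0).card ≤ k ∧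
    M = Matrix.of fun i j => v i * star (v j)}

set_option maxHeartbeats 1000000 in
open ComplexOrder in
/-- A Hermitian W satisfies tr(Wρ) ≥ 0 for all ρ ∈ I_k iff every k×k principal
submatrix of W is positive semidefinite. -/
theorem stmt15 (n k : ℕ) (hk : 1 ≤ k) (hkn : k ≤ n)
    (W : Matrix (Fin n) (Fin n) ℂ) (hW : W.IsHermitian) :
    (∀ ρ ∈ kIncoherent n k, 0 ≤ (W * ρ).trace) ↔
    (∀ f : Fin k → Fin n, StrictMono f → (W.submatrix f f).PosSemidef) := by
  constructor
  · intro h f hf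
    refine Matrix.posSemidef_iff_dotProduct_mulVec.2 ⟨hW.submatrix f, fun x => ?_⟩
    by_cases hx : x = 0
    · simp [hx]
    -- normalize x
    have hs : 0 < ∑ a, ‖x a‖ ^ 2 := by
      obtain ⟨a, ha⟩ := Function.ne_iff.1 hx
      refine Finset.sum_pos' (fun a _ => by positivity) ⟨a, Finset.mem_univ a, ?_⟩
      exact pow_pos (norm_pos_iff.2 ha) 2
    set c : ℝ := Real.sqrt (∑ a, ‖x a‖ ^ 2) with hc
    have hcpos : 0 < c := Real.sqrt_pos.2 hs
    have hcsq : c ^ 2 = ∑ a, ‖x a‖ ^ 2 := Real.sq_sqrt hs.le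
    set v : Fin n → ℂ := Function.extend f (fun a => (c : ℂ)⁻¹ * x a) 0 with hv
    have hvf : ∀ a, v (f a) = (c : ℂ)⁻¹ * x a := fun a =>
      hf.injective.extend_apply _ _ a
    have hv0 : ∀ i, (∀ a, f a ≠ i) → v i = 0 := by
      intro i hi
      rw [hv, Function.extend_apply' _ _ _ (fun ⟨a, ha⟩ => hi a ha)]
      rfl
    have hmem : (Matrix.of fun i j => v i * star (v j)) ∈ kIncoherent n k := by
      refine subset_convexHull ℝ _ ⟨v, ?_, ?_, rfl⟩
      · rw [sum_support_subset f hf.injective _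
          (fun i hi => by rw [hv0 i hi]; simp)]
        have : ∀ a, ‖v (f a)‖ ^ 2 = c⁻¹ ^ 2 * ‖x a‖ ^ 2 := by
          intro a
          rw [hvf a, norm_mul, norm_inv, Complex.norm_of_nonneg hcpos.le,
            mul_pow]
        rw [Finset.sum_congr rfl fun a _ => this a, ← Finset.mul_sum, ← hcsq]
        field_simp
      · calc (Finset.univ.filter fun i => v i ≠ 0).card
              ≤ (Finset.image f Finset.univ).card := by
                refine Finset.card_le_card fun i hi => ?_
                simp only [Finset.mem_filter, Finset.mem_univ, true_and] at hi
                by_contra hni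
                exact hi (hv0 i fun a ha =>
                  hni (Finset.mem_image.2 ⟨a, Finset.mem_univ a, ha⟩))
          _ ≤ k := by
                rw [Finset.card_image_of_injective _ hf.injective]
                simp
    have := h _ hmem
    rw [trace_mul_outer, quad_restrict W f hf.injective v hv0] at this
    have hvfc : v ∘ f = fun a => (c : ℂ)⁻¹ * x a := funext hvf
    rw [hvfc] at this
    have key : star (fun a => (c : ℂ)⁻¹ * x a) ⬝ᵥ
        (W.submatrix f f) *ᵥ (fun a => (c : ℂ)⁻¹ * x a)
        = ((c : ℂ)⁻¹ * (c : ℂ)⁻¹) * (star x ⬝ᵥ (W.submatrix f f) *ᵥ x) := by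
      simp only [dotProduct, Matrix.mulVec, Pi.star_apply, star_mul',
        Complex.star_def, Complex.conj_ofReal, map_inv₀, Finset.mul_sum]
      refine Finset.sum_congr rfl fun a _ => ?_
      refine Finset.sum_congr rfl fun b _ => ?_
      ring
    rw [key] at this
    have hcne : (c : ℂ) ≠ 0 := by exact_mod_cast hcpos.ne'
    have : 0 ≤ ((c : ℂ) * (c : ℂ)) * (((c : ℂ)⁻¹ * (c : ℂ)⁻¹) *
        (star x ⬝ᵥ (W.submatrix f f) *ᵥ x)) := by
      refine mul_nonneg ?_ this
      rw [← Complex.ofReal_mul, Complex.zero_le_real]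
      exact mul_nonneg hcpos.le hcpos.le
    have hone : ((c : ℂ) * (c : ℂ)) * ((c : ℂ)⁻¹ * (c : ℂ)⁻¹) = 1 := by
      rw [mul_mul_mul_comm, mul_inv_cancel₀ hcne, one_mul]
    rwa [← mul_assoc, hone, one_mul] at this
  · intro h ρ hρ
    suffices hsub : kIncoherent n k ⊆
        {M : Matrix (Fin n) (Fin n) ℂ | 0 ≤ (W * M).trace} from hsub hρ
    refine convexHull_min ?_ ?_
    · rintro M ⟨v, hnorm, hcard, rfl⟩
      rw [Set.mem_setOf_eq, trace_mul_outer]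
      -- find a k-subset containing the support
      obtain ⟨T, hsub, hT⟩ := Finset.exists_superset_card_eq hcard (by simpa using hkn)
      set f := T.orderEmbOfFin hT with hfdef
      have hfmono : StrictMono (f : Fin k → Fin n) := f.strictMono
      have hv0 : ∀ i, (∀ a, f a ≠ i) → v i = 0 := by
        intro i hi
        by_contra hne
        have : i ∈ T := hsub (Finset.mem_filter.2 ⟨Finset.mem_univ i, hne⟩)
        obtain ⟨a, ha⟩ := (Finset.range_orderEmbOfFin T hT ▸ this : i ∈ Set.range f)
        exact hi a ha
      rw [quad_restrict W f hfmono.injective v hv0]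
      exact (h f hfmono).dotProduct_mulVec_nonneg (v ∘ f)
    · intro x hx y hy a b ha hb hab
      simp only [Set.mem_setOf_eq] at hx hy ⊢
      rw [Matrix.mul_add, Matrix.mul_smul, Matrix.mul_smul, Matrix.trace_add,
        Matrix.trace_smul, Matrix.trace_smul]
      refine add_nonneg ?_ ?_
      · rw [Complex.real_smul]
        exact mul_nonneg (by rw [Complex.zero_le_real]; exact ha) hx
      · rw [Complex.real_smul]
        exact mul_nonneg (by rw [Complex.zero_le_real]; exact hb) hy
end
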